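/- Let γ ∈ ℝ with γ ≠ −1 and let θ ∈ (0,1). Then there exists K > 0 (depending only on γ and θ) such that for all h > 0, all x_n ∈ ℝ and all y ∈ ℝ with (h/2)/|x_{n+1/2} − y| ≤ θ (where x_{n+1} = x_n + h and x_{n+1/2} = x_n + h/2; in particular y ∉ [x_n, x_{n+1}]), one has |(sgn(x_{n+1}−y)·|x_{n+1}−y|^{γ+1} − sgn(x_n−y)·|x_n−y|^{γ+1})/(γ+1) − h·|x_{n+1/2}−y|^{γ}| ≤ K · h³ · |x_{n+1/2}−y|^{γ−2}. -/

import Mathlib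

open Filter Set

private lemma midpoint_key (γ θ : ℝ) (hγ : γ ≠ -1) (hθ1 : 0 < θ) (hθ2 : θ < 1)
    (h m : ℝ) (hh : 0 < h) (hm : 0 < m) (hcond : h / 2 ≤ θ * m) :
    |((m + h / 2) ^ (γ + 1) - (m - h / 2) ^ (γ + 1)) / (γ + 1) - h * m ^ γ| ≤
      (|γ * (γ - 1)| * max ((1 - θ) ^ (γ - 2)) ((1 + θ) ^ (γ - 2)) / 4) * h ^ 3 * m ^ (γ - 2) := by
  have hγ1 : γ + 1 ≠ 0 := fun hc => hγ (by linarith)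
  have h1θ : (0 : ℝ) < 1 - θ := by linarith
  set Cθ := max ((1 - θ) ^ (γ - 2)) ((1 + θ) ^ (γ - 2)) with hCθ
  set M3 := |γ * (γ - 1)| * Cθ * m ^ (γ - 2) with hM3
  set s : Set ℝ := Set.Icc (m - h / 2) (m + h / 2) with hsdef
  have hms : m ∈ s := by constructor <;> simp <;> linarith
  have has : m - h / 2 ∈ s := by constructor <;> simp <;> linarith
  have hbs : m + h / 2 ∈ s := by constructor <;> simp <;> linarith
  have hpos : ∀ t ∈ s, 0 < t := by
    rintro t ⟨ht1, ht2⟩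
    nlinarith
  have hdist : ∀ t ∈ s, |t - m| ≤ h / 2 := by
    rintro t ⟨ht1, ht2⟩
    rw [abs_sub_le_iff]; constructor <;> linarith
  have hCθpos : 0 < Cθ :=
    lt_of_lt_of_le (Real.rpow_pos_of_pos h1θ _) (le_max_left _ _)
  have hrpow : ∀ t ∈ s, t ^ (γ - 2) ≤ Cθ * m ^ (γ - 2) := by
    rintro t hts
    obtain ⟨ht1, ht2⟩ := hts
    have htpos := hpos t ⟨ht1, ht2⟩
    have hq1 : 1 - θ ≤ t / m := by rw [le_div_iff₀ hm]; nlinarith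
    have hq2 : t / m ≤ 1 + θ := by rw [div_le_iff₀ hm]; nlinarith
    have ht : t = (t / m) * m := by field_simp
    rw [ht, Real.mul_rpow (by positivity) hm.le]
    gcongr
    rcases le_or_gt 0 (γ - 2) with hs2 | hs2
    · exact le_trans (Real.rpow_le_rpow (by linarith) hq2 hs2) (le_max_right _ _)
    · exact le_trans (Real.rpow_le_rpow_of_nonpos h1θ hq1 hs2.le) (le_max_left _ _)
  have hM3nonneg : 0 ≤ M3 := by positivity
  have hconv : Convex ℝ s := convex_Icc _ _
  -- Step B : Lipschitz bound for φ' = γ t^(γ-1)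
  have stepB : ∀ t ∈ s, |γ * t ^ (γ - 1) - γ * m ^ (γ - 1)| ≤ M3 * (h / 2) := by
    intro t hts
    have mv := hconv.norm_image_sub_le_of_norm_hasDerivWithin_le
      (f := fun u : ℝ => γ * u ^ (γ - 1)) (f' := fun u : ℝ => γ * ((γ - 1) * u ^ (γ - 2)))
      (C := M3) ?_ ?_ hms hts
    · calc |γ * t ^ (γ - 1) - γ * m ^ (γ - 1)| ≤ M3 * ‖t - m‖ := mv
        _ ≤ M3 * (h / 2) := by
            rw [Real.norm_eq_abs]; exact mul_le_mul_of_nonneg_left (hdist t hts) hM3nonneg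
    · intro u hus
      have hd := Real.hasDerivAt_rpow_const (x := u) (p := γ - 1) (Or.inl (hpos u hus).ne')
      have he : γ - 1 - 1 = γ - 2 := by ring
      rw [he] at hd
      exact (hd.const_mul γ).hasDerivWithinAt
    · intro u hus
      have hu2 : (0:ℝ) ≤ u ^ (γ - 2) := Real.rpow_nonneg (hpos u hus).le _
      calc ‖γ * ((γ - 1) * u ^ (γ - 2))‖ = |γ * (γ - 1)| * u ^ (γ - 2) := by
            rw [Real.norm_eq_abs, ← mul_assoc, abs_mul, abs_of_nonneg hu2]
        _ ≤ |γ * (γ - 1)| * (Cθ * m ^ (γ - 2)) :=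
            mul_le_mul_of_nonneg_left (hrpow u hus) (abs_nonneg _)
        _ = M3 := by rw [hM3]; ring
  -- Step C : second order bound for φ = t^γ
  have stepC : ∀ t ∈ s, |t ^ γ - m ^ γ - (t - m) * (γ * m ^ (γ - 1))| ≤ M3 * (h / 2) * (h / 2) := by
    intro t hts
    have mv := hconv.norm_image_sub_le_of_norm_hasDerivWithin_le
      (f := fun u : ℝ => u ^ γ - (u - m) * (γ * m ^ (γ - 1)))
      (f' := fun u : ℝ => γ * u ^ (γ - 1) - γ * m ^ (γ - 1))
      (C := M3 * (h / 2)) ?_ stepB hms hts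
    · have hψm : m ^ γ - (m - m) * (γ * m ^ (γ - 1)) = m ^ γ := by ring
      calc |t ^ γ - m ^ γ - (t - m) * (γ * m ^ (γ - 1))|
          = ‖(t ^ γ - (t - m) * (γ * m ^ (γ - 1))) - (m ^ γ - (m - m) * (γ * m ^ (γ - 1)))‖ := by
            rw [Real.norm_eq_abs]; congr 1; ring
        _ ≤ M3 * (h / 2) * ‖t - m‖ := mv
        _ ≤ M3 * (h / 2) * (h / 2) := by
            rw [Real.norm_eq_abs]
            exact mul_le_mul_of_nonneg_left (hdist t hts) (by positivity)
    · intro u hus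
      have hd := Real.hasDerivAt_rpow_const (x := u) (p := γ) (Or.inl (hpos u hus).ne')
      have hd2 : HasDerivAt (fun v : ℝ => (v - m) * (γ * m ^ (γ - 1)))
          (γ * m ^ (γ - 1)) u := by
        simpa using ((hasDerivAt_id u).sub_const m).mul_const (γ * m ^ (γ - 1))
      exact (hd.sub hd2).hasDerivWithinAt
  -- Step D : third order bound for F
  have stepD := hconv.norm_image_sub_le_of_norm_hasDerivWithin_le
    (f := fun u : ℝ => u ^ (γ + 1) / (γ + 1) - (u - m) * m ^ γ
        - (u - m) ^ 2 / 2 * (γ * m ^ (γ - 1)))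
    (f' := fun u : ℝ => u ^ γ - m ^ γ - (u - m) * (γ * m ^ (γ - 1)))
    (C := M3 * (h / 2) * (h / 2)) ?_ ?_ has hbs
  · have hseq : (m + h / 2) - (m - h / 2) = h := by ring
    have main : |((m + h / 2) ^ (γ + 1) - (m - h / 2) ^ (γ + 1)) / (γ + 1) - h * m ^ γ|
        ≤ M3 * (h / 2) * (h / 2) * h := by
      calc |((m + h / 2) ^ (γ + 1) - (m - h / 2) ^ (γ + 1)) / (γ + 1) - h * m ^ γ|
          = ‖((m + h / 2) ^ (γ + 1) / (γ + 1) - ((m + h / 2) - m) * m ^ γ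
              - ((m + h / 2) - m) ^ 2 / 2 * (γ * m ^ (γ - 1)))
            - ((m - h / 2) ^ (γ + 1) / (γ + 1) - ((m - h / 2) - m) * m ^ γ
              - ((m - h / 2) - m) ^ 2 / 2 * (γ * m ^ (γ - 1)))‖ := by
            rw [Real.norm_eq_abs]; congr 1; ring
        _ ≤ M3 * (h / 2) * (h / 2) * ‖(m + h / 2) - (m - h / 2)‖ := stepD
        _ = M3 * (h / 2) * (h / 2) * h := by
            rw [hseq, Real.norm_eq_abs, abs_of_pos hh]
    calc |((m + h / 2) ^ (γ + 1) - (m - h / 2) ^ (γ + 1)) / (γ + 1) - h * m ^ γ|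
        ≤ M3 * (h / 2) * (h / 2) * h := main
      _ = (|γ * (γ - 1)| * Cθ / 4) * h ^ 3 * m ^ (γ - 2) := by rw [hM3]; ring
  · intro u hus
    have hd := Real.hasDerivAt_rpow_const (x := u) (p := γ + 1) (Or.inl (hpos u hus).ne')
    have he : γ + 1 - 1 = γ := by ring
    rw [he] at hd
    have hd1 : HasDerivAt (fun v : ℝ => v ^ (γ + 1) / (γ + 1)) (u ^ γ) u := by
      have := hd.div_const (γ + 1)
      have heq : (γ + 1) * u ^ γ / (γ + 1) = u ^ γ := by field_simp
      rwa [heq] at this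
    have hd2 : HasDerivAt (fun v : ℝ => (v - m) * m ^ γ) (m ^ γ) u := by
      simpa using ((hasDerivAt_id u).sub_const m).mul_const (m ^ γ)
    have hd3 : HasDerivAt (fun v : ℝ => (v - m) ^ 2 / 2 * (γ * m ^ (γ - 1)))
        ((u - m) * (γ * m ^ (γ - 1))) u := by
      have := ((((hasDerivAt_id u).sub_const m).pow 2).div_const 2).mul_const
        (γ * m ^ (γ - 1))
      exact this.congr_deriv (by simp)
    exact ((hd1.sub hd2).sub hd3).hasDerivWithinAt
  · intro u hus
    have := stepC u hus
    rw [Real.norm_eq_abs]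
    exact this

theorem stmt14 (γ θ : ℝ) (hγ : γ ≠ -1) (hθ : θ ∈ Set.Ioo (0 : ℝ) 1) :
    ∃ K : ℝ, 0 < K ∧ ∀ h xn y : ℝ, 0 < h → h / 2 ≤ θ * |xn + h / 2 - y| →
      |(Real.sign (xn + h - y) * |xn + h - y| ^ (γ + 1) -
            Real.sign (xn - y) * |xn - y| ^ (γ + 1)) / (γ + 1) -
          h * |xn + h / 2 - y| ^ γ| ≤
        K * h ^ 3 * |xn + h / 2 - y| ^ (γ - 2) := by
  obtain ⟨hθ1, hθ2⟩ := hθ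
  have h1θ : (0 : ℝ) < 1 - θ := by linarith
  set K0 : ℝ := |γ * (γ - 1)| * max ((1 - θ) ^ (γ - 2)) ((1 + θ) ^ (γ - 2)) / 4 with hK0
  have hK0nonneg : 0 ≤ K0 := by
    have : (0:ℝ) < max ((1 - θ) ^ (γ - 2)) ((1 + θ) ^ (γ - 2)) :=
      lt_of_lt_of_le (Real.rpow_pos_of_pos h1θ _) (le_max_left _ _)
    positivity
  refine ⟨K0 + 1, by linarith, ?_⟩
  intro h xn y hh hcond
  set m : ℝ := xn + h / 2 - y with hmdef
  have hm0 : m ≠ 0 := by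
    intro hc
    rw [hc] at hcond
    simp at hcond
    linarith
  have hmabs : 0 < |m| := abs_pos.mpr hm0
  have key := midpoint_key γ θ hγ hθ1 hθ2 h |m| hh hmabs hcond
  have hstep : K0 * h ^ 3 * |m| ^ (γ - 2) ≤ (K0 + 1) * h ^ 3 * |m| ^ (γ - 2) := by
    have : (0:ℝ) ≤ h ^ 3 * |m| ^ (γ - 2) := by positivity
    nlinarith
  refine le_trans ?_ hstep
  have hab : xn + h - y = m + h / 2 := by rw [hmdef]; ring
  have haa : xn - y = m - h / 2 := by rw [hmdef]; ring
  rcases hm0.lt_or_gt with hneg | hpos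
  · -- m < 0
    have habs : |m| = -m := abs_of_neg hneg
    have hb : m + h / 2 < 0 := by
      have := hcond; rw [habs] at this; nlinarith
    have ha : m - h / 2 < 0 := by linarith
    rw [hab, haa, Real.sign_of_neg hb, Real.sign_of_neg ha,
      abs_of_neg hb, abs_of_neg ha, habs]
    have e1 : -(m + h / 2) = -m - h / 2 := by ring
    have e2 : -(m - h / 2) = -m + h / 2 := by ring
    rw [e1, e2]
    calc |(-1 * (-m - h / 2) ^ (γ + 1) - -1 * (-m + h / 2) ^ (γ + 1)) / (γ + 1)
          - h * (-m) ^ γ|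
        = |((-m + h / 2) ^ (γ + 1) - (-m - h / 2) ^ (γ + 1)) / (γ + 1) - h * (-m) ^ γ| := by
          congr 1; ring
      _ ≤ K0 * h ^ 3 * (-m) ^ (γ - 2) := by rw [habs] at key; exact key
  · -- m > 0
    have habs : |m| = m := abs_of_pos hpos
    have hb : 0 < m + h / 2 := add_pos hpos (by linarith)
    have ha : 0 < m - h / 2 := by
      have := hcond; rw [habs] at this; nlinarith
    rw [hab, haa, Real.sign_of_pos hb, Real.sign_of_pos ha,
      abs_of_pos hb, abs_of_pos ha, habs]
    rw [habs] at key
    calc |(1 * (m + h / 2) ^ (γ + 1) - 1 * (m - h / 2) ^ (γ + 1)) / (γ + 1) - h * m ^ γ|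
        = |((m + h / 2) ^ (γ + 1) - (m - h / 2) ^ (γ + 1)) / (γ + 1) - h * m ^ γ| := by
          congr 1; ring
      _ ≤ K0 * h ^ 3 * m ^ (γ - 2) := key
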